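/- With n_j = σ(j-1)² + 1 and d_j = Π_{i≠j} n_i/(n_i - n_j) for 1 ≤ j ≤ r, the sequence h = Σ_{j=1}^r d_j δ_{n_j} satisfies ‖h‖_{ℓ¹} = Σ_{j=1}^r |d_j| < cosh(π σ^{-1/2}). -/

import Mathlib

open Finset Nat Filter Real Topology

lemma euler_prod (u : ℝ) (hu : 0 < u) :
    Tendsto (fun n => ∏ j ∈ Finset.range n, (1 + u^2/((j:ℝ)+1)^2)) atTop
      (𝓝 (Real.sinh (π*u)/(π*u))) := by
  have h := Complex.tendsto_euler_sin_prod ((u:ℂ)*Complex.I)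
  have key : ∀ n, (π * ((u:ℂ)*Complex.I) * ∏ j ∈ Finset.range n,
      (1 - ((u:ℂ)*Complex.I)^2/((j:ℂ)+1)^2)).im
      = π * u * ∏ j ∈ Finset.range n, (1 + u^2/((j:ℝ)+1)^2) := by
    intro n
    have hc : ∀ j ∈ Finset.range n, (1 - ((u:ℂ)*Complex.I)^2/((j:ℂ)+1)^2)
        = ((1 + u^2/((j:ℝ)+1)^2 : ℝ) : ℂ) := by
      intro j _
      push_cast
      rw [mul_pow, Complex.I_sq]
      ring
    rw [Finset.prod_congr rfl hc, ← Complex.ofReal_prod,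
      show (π:ℂ) * ((u:ℂ)*Complex.I) * ((∏ j ∈ Finset.range n, (1 + u^2/((j:ℝ)+1)^2) : ℝ):ℂ)
        = ((π * u * ∏ j ∈ Finset.range n, (1 + u^2/((j:ℝ)+1)^2) : ℝ):ℂ) * Complex.I by
        push_cast; ring]
    rw [Complex.mul_I_im, Complex.ofReal_re]
  have hsin : (Complex.sin ((π:ℂ) * ((u:ℂ)*Complex.I))).im = Real.sinh (π*u) := by
    rw [show (π : ℂ) * ((u:ℂ)*Complex.I) = ((π*u : ℝ):ℂ) * Complex.I by push_cast; ring,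
      Complex.sin_mul_I, ← Complex.ofReal_sinh, Complex.mul_I_im, Complex.ofReal_re]
  have h2 : Tendsto (fun n => π * u * ∏ j ∈ Finset.range n, (1 + u^2/((j:ℝ)+1)^2))
      atTop (𝓝 (Real.sinh (π*u))) := by
    have h3 := (Complex.continuous_im.tendsto _).comp h
    rw [Function.comp_def] at h3
    simp only [key] at h3
    rwa [hsin] at h3
  have hπu : (π*u) ≠ 0 := by positivity
  have h4 := h2.div_const (π*u)
  refine h4.congr fun n => ?_
  rw [mul_div_cancel_left₀ _ hπu]

lemma P_pos (u : ℝ) (n : ℕ) : 0 < ∏ j ∈ Finset.range n, (1 + u^2/((j:ℝ)+1)^2) := by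
  apply Finset.prod_pos
  intro j _
  positivity

lemma P_mono (u : ℝ) : Monotone (fun n => ∏ j ∈ Finset.range n, (1 + u^2/((j:ℝ)+1)^2)) := by
  apply monotone_nat_of_le_succ
  intro n
  rw [Finset.prod_range_succ]
  nth_rewrite 1 [← mul_one (∏ j ∈ Finset.range n, (1 + u^2/((j:ℝ)+1)^2))]
  apply mul_le_mul_of_nonneg_left _ (P_pos u n).le
  have : (0:ℝ) ≤ u^2/((n:ℝ)+1)^2 := by positivity
  linarith

lemma P_lt_sinh (u : ℝ) (hu : 0 < u) (m : ℕ) :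
    ∏ j ∈ Finset.range m, (1 + u^2/((j:ℝ)+1)^2) < Real.sinh (π*u)/(π*u) := by
  have hle := (P_mono u).ge_of_tendsto (euler_prod u hu) (m+1)
  refine lt_of_lt_of_le ?_ hle
  rw [Finset.prod_range_succ]
  nth_rewrite 1 [← mul_one (∏ j ∈ Finset.range m, (1 + u^2/((j:ℝ)+1)^2))]
  apply mul_lt_mul_of_pos_left _ (P_pos u m)
  have : 0 < u^2/((m:ℝ)+1)^2 := by positivity
  linarith

lemma dlog_term (c : ℝ) (hc : 0 < c) (v : ℝ) :
    HasDerivAt (fun w : ℝ => Real.log (1 + w^2/c^2)) (2*v/(c^2+v^2)) v := by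
  have h1 : HasDerivAt (fun w : ℝ => 1 + w^2/c^2) (2*v/c^2) v := by
    have := ((hasDerivAt_pow 2 v).div_const (c^2)).const_add 1
    simpa using this
  have hne : (1 + v^2/c^2) ≠ 0 := by positivity
  have := h1.log hne
  convert this using 1
  field_simp

lemma cot_bound (u : ℝ) (hu : 0 < u) (m : ℕ) :
    ∑ a ∈ Finset.range m, 2*u^2/(((a:ℝ)+1)^2+u^2)
      ≤ π*u*Real.cosh (π*u)/Real.sinh (π*u) - 1 := by
  set D : ℝ → ℝ := fun v => Real.log (Real.sinh (π*v)) - Real.log (π*v)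
      - ∑ a ∈ Finset.range m, Real.log (1 + v^2/((a:ℝ)+1)^2) with hD
  -- monotonicity of D on positives
  have hmono : ∀ x y : ℝ, 0 < x → x ≤ y → D x ≤ D y := by
    intro x y hx hxy
    have hy : 0 < y := lt_of_lt_of_le hx hxy
    have hlim : ∀ v : ℝ, 0 < v →
        Tendsto (fun N => ∑ a ∈ Finset.range N, Real.log (1 + v^2/((a:ℝ)+1)^2)
          - ∑ a ∈ Finset.range m, Real.log (1 + v^2/((a:ℝ)+1)^2)) atTop (𝓝 (D v)) := by
      intro v hv
      have hL : (0:ℝ) < Real.sinh (π*v)/(π*v) := by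
        apply div_pos (Real.sinh_pos_iff.mpr (by positivity)) (by positivity)
      have hlog := ((Real.continuousAt_log hL.ne').tendsto).comp (euler_prod v hv)
      rw [Function.comp_def] at hlog
      have heq : ∀ N, Real.log (∏ j ∈ Finset.range N, (1 + v^2/((j:ℝ)+1)^2))
          = ∑ a ∈ Finset.range N, Real.log (1 + v^2/((a:ℝ)+1)^2) := by
        intro N
        exact Real.log_prod (fun j _ => by positivity)
      simp only [heq] at hlog
      rw [Real.log_div (Real.sinh_pos_iff.mpr (by positivity)).ne' (by positivity)] at hlog
      exact hlog.sub_const _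
    refine le_of_tendsto_of_tendsto (hlim x hx) (hlim y hy) ?_
    filter_upwards [eventually_ge_atTop m] with N hN
    rw [← Finset.sum_Ico_eq_sub _ hN, ← Finset.sum_Ico_eq_sub _ hN]
    apply Finset.sum_le_sum
    intro a _
    apply Real.log_le_log (by positivity)
    have : x^2 ≤ y^2 := by nlinarith
    gcongr
  -- derivative of D
  have hderiv : HasDerivAt D
      (π*Real.cosh (π*u)/Real.sinh (π*u) - 1/u
        - ∑ a ∈ Finset.range m, 2*u/(((a:ℝ)+1)^2+u^2)) u := by
    have hπu : (0:ℝ) < π*u := by positivity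
    have hsne : Real.sinh (π*u) ≠ 0 := (Real.sinh_pos_iff.mpr hπu).ne'
    have hlin : HasDerivAt (fun w : ℝ => π*w) π u := by
      simpa using (hasDerivAt_id u).const_mul π
    have d1 : HasDerivAt (fun w : ℝ => Real.log (Real.sinh (π*w)))
        (π*Real.cosh (π*u)/Real.sinh (π*u)) u := by
      have := ((Real.hasDerivAt_sinh (π*u)).comp u hlin).log hsne
      convert this using 1
      simp only [Function.comp_apply]
      ring
      rfl
    have d2 : HasDerivAt (fun w : ℝ => Real.log (π*w)) (1/u) u := by
      have := hlin.log hπu.ne'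
      convert this using 1
      field_simp
    have d3 : HasDerivAt (fun w : ℝ => ∑ a ∈ Finset.range m, Real.log (1 + w^2/((a:ℝ)+1)^2))
        (∑ a ∈ Finset.range m, 2*u/(((a:ℝ)+1)^2+u^2)) u := by
      apply HasDerivAt.fun_sum
      intro a _
      exact dlog_term ((a:ℝ)+1) (by positivity) u
    exact (d1.sub d2).sub d3
  -- derivative nonneg via slope
  have hδ : 0 ≤ π*Real.cosh (π*u)/Real.sinh (π*u) - 1/u
      - ∑ a ∈ Finset.range m, 2*u/(((a:ℝ)+1)^2+u^2) := by
    have hsl := hasDerivAt_iff_tendsto_slope.mp hderiv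
    have hsl2 : Tendsto (slope D u) (𝓝[>] u)
        (𝓝 (π*Real.cosh (π*u)/Real.sinh (π*u) - 1/u
          - ∑ a ∈ Finset.range m, 2*u/(((a:ℝ)+1)^2+u^2))) :=
      hsl.mono_left (nhdsWithin_mono u (fun w hw => ne_of_gt hw))
    refine ge_of_tendsto hsl2 ?_
    filter_upwards [self_mem_nhdsWithin] with w hw
    have hw' : u < w := hw
    rw [slope_def_field]
    have : D u ≤ D w := hmono u w hu hw'.le
    have hd : 0 < w - u := by linarith
    apply div_nonneg (by linarith) hd.le
  have hsum : ∑ a ∈ Finset.range m, 2*u/(((a:ℝ)+1)^2+u^2)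
      ≤ π*Real.cosh (π*u)/Real.sinh (π*u) - 1/u := by linarith
  have := mul_le_mul_of_nonneg_left hsum hu.le
  rw [Finset.mul_sum] at this
  calc ∑ a ∈ Finset.range m, 2*u^2/(((a:ℝ)+1)^2+u^2)
      = ∑ a ∈ Finset.range m, u * (2*u/(((a:ℝ)+1)^2+u^2)) := by
        apply Finset.sum_congr rfl
        intro a _
        ring
    _ ≤ u * (π*Real.cosh (π*u)/Real.sinh (π*u) - 1/u) := this
    _ = π*u*Real.cosh (π*u)/Real.sinh (π*u) - 1 := by
        field_simp

lemma fact_add (n k : ℕ) : (n+k)! = n ! * ∏ i ∈ Finset.range k, (n+1+i) := by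
  induction k with
  | zero => simp
  | succ k ih =>
    rw [Finset.prod_range_succ, ← mul_assoc, ← ih, show n+(k+1) = (n+k)+1 by ring,
      Nat.factorial_succ]
    ring

lemma two_mul_prod (b : ℕ) (hb : 1 ≤ b) :
    2 * ∏ a ∈ Finset.range b, (b + a) = ∏ i ∈ Finset.range b, (b+1+i) := by
  obtain ⟨c, rfl⟩ := Nat.exists_eq_add_of_le hb
  rw [add_comm 1 c]
  rw [Finset.prod_range_succ' (fun a => (c+1) + a), Finset.prod_range_succ]
  have h1 : ∀ i ∈ Finset.range c, (c+1) + (i+1) = (c+1+1) + i := by intros; omega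
  rw [Finset.prod_congr rfl h1]
  have : c+1+1+c = 2*(c+1) := by ring
  rw [this]
  ring

lemma prodL (b : ℕ) (hb : 1 ≤ b) :
    2 * ∏ a ∈ Finset.range b, (b^2 - a^2) = (2*b)! := by
  have h1 : ∀ a ∈ Finset.range b, b^2 - a^2 = (b-a)*(b+a) := by
    intro a ha
    have := Finset.mem_range.mp ha
    rcases Nat.exists_eq_add_of_lt this with ⟨k, rfl⟩
    have h : (a+k+1)^2 = a^2 + ((a+k+1)-a)*((a+k+1)+a) := by
      have : (a+k+1)-a = k+1 := by omega
      rw [this]; ring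
    omega
  rw [Finset.prod_congr rfl h1, Finset.prod_mul_distrib]
  have h2 : ∏ a ∈ Finset.range b, (b - a) = b ! := by
    rw [← Finset.prod_range_reflect (fun a => b - a) b]
    have : ∀ j ∈ Finset.range b, b - (b-1-j) = j+1 := by
      intro j hj
      have := Finset.mem_range.mp hj
      omega
    rw [Finset.prod_congr rfl this, Finset.prod_range_add_one_eq_factorial]
  rw [h2, show 2*b = b + b by ring, fact_add b b, ← two_mul_prod b hb]
  ring

lemma fact_sq_le (m b : ℕ) (hb : b ≤ m) : m ! * m ! ≤ (m-b)! * (m+b)! := by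
  induction b with
  | zero => simp
  | succ b ih =>
    have hb' : b ≤ m := by omega
    have h1 : (m-b)! = ((m-(b+1))+1)! := by congr 1; omega
    have h2 : ((m-(b+1))+1)! = ((m-(b+1))+1) * (m-(b+1))! := Nat.factorial_succ _
    have h3 : (m+(b+1))! = (m+b+1) * (m+b)! := by
      rw [show m+(b+1) = (m+b)+1 by ring, Nat.factorial_succ]
    calc m ! * m ! ≤ (m-b)! * (m+b)! := ih hb'
      _ = ((m-(b+1))+1) * (m-(b+1))! * (m+b)! := by rw [← h2, ← h1]
      _ ≤ (m+b+1) * (m-(b+1))! * (m+b)! := by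
          have : (m-(b+1))+1 ≤ m+b+1 := by omega
          exact Nat.mul_le_mul_right _ (Nat.mul_le_mul_right _ this)
      _ = (m-(b+1))! * (m+(b+1))! := by rw [h3]; ring

lemma prodK (m b : ℕ) (hb1 : 1 ≤ b) (hbm : b ≤ m) :
    ∏ a ∈ (Finset.range (m+1)).erase b, |((a:ℝ))^2 - ((b:ℝ))^2|
      = ((m-b)! : ℝ) * ((m+b)! : ℝ) / 2 := by
  induction m with
  | zero => omega
  | succ m ih =>
    rcases Nat.lt_or_ge b (m+1) with hlt | hge
    · -- b ≤ m
      have hbm' : b ≤ m := by omega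
      have hset : (Finset.range (m+2)).erase b
          = insert (m+1) ((Finset.range (m+1)).erase b) := by
        ext x
        simp only [Finset.mem_erase, Finset.mem_range, Finset.mem_insert]
        omega
      have hnot : (m+1) ∉ (Finset.range (m+1)).erase b := by simp
      rw [hset, Finset.prod_insert hnot, ih hbm']
      have habs : |((m+1:ℕ):ℝ)^2 - ((b:ℕ):ℝ)^2|
          = ((m+1-b : ℕ):ℝ) * ((m+1+b : ℕ):ℝ) := by
        rw [abs_of_nonneg]
        · rw [Nat.cast_sub (by omega)]
          push_cast
          ring
        · have : ((b:ℕ):ℝ) ≤ ((m+1:ℕ):ℝ) := by exact_mod_cast Nat.le_of_lt hlt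
          nlinarith [Nat.cast_nonneg (α := ℝ) b]
      push_cast at habs ⊢
      rw [habs]
      have e1 : (m+1-b)! = (m+1-b) * (m-b)! := by
        rw [show m+1-b = (m-b)+1 by omega, Nat.factorial_succ]
      have e2 : (m+1+b)! = (m+1+b) * (m+b)! := by
        rw [show m+1+b = (m+b)+1 by ring, Nat.factorial_succ]
      rw [e1, e2]
      push_cast [Nat.cast_sub (show b ≤ m+1 by omega)]
      ring
    · -- b = m+1
      have hbe : b = m+1 := by omega
      subst hbe
      have hset : (Finset.range (m+2)).erase (m+1) = Finset.range (m+1) := by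
        rw [Finset.range_add_one, Finset.erase_insert (by simp)]
      rw [hset]
      have hcast : ∀ a ∈ Finset.range (m+1),
          |((a:ℕ):ℝ)^2 - (((m+1:ℕ)):ℝ)^2| = (((m+1)^2 - a^2 : ℕ) : ℝ) := by
        intro a ha
        have halt := Finset.mem_range.mp ha
        rw [Nat.cast_sub (Nat.pow_le_pow_left (by omega) 2)]
        rw [abs_sub_comm, abs_of_nonneg]
        · push_cast; ring
        · have : ((a:ℕ):ℝ) ≤ ((m+1:ℕ):ℝ) := by exact_mod_cast Nat.le_of_lt halt
          have ha0 : (0:ℝ) ≤ ((a:ℕ):ℝ) := Nat.cast_nonneg a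
          nlinarith
      rw [Finset.prod_congr rfl hcast, ← Nat.cast_prod]
      have hL := prodL (m+1) (by omega)
      have h2 : (2:ℝ) * ((∏ a ∈ Finset.range (m+1), ((m+1)^2 - a^2) : ℕ) : ℝ)
          = (((2*(m+1))! : ℕ) : ℝ) := by exact_mod_cast hL
      rw [show (m+1) - (m+1) = 0 by omega]
      simp only [Nat.factorial_zero, Nat.cast_one, one_mul]
      rw [show m+1+(m+1) = 2*(m+1) by ring]
      linarith

theorem stmt_11 (r σ : ℕ) (hr : 1 ≤ r) (hσ : 1 ≤ σ)
    (nn : ℕ → ℕ) (hnn : ∀ j, nn j = σ * (j - 1) ^ 2 + 1)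
    (dd : ℕ → ℝ)
    (hdd : ∀ j, dd j = ∏ i ∈ (Finset.Icc 1 r).erase j, (nn i : ℝ) / ((nn i : ℝ) - (nn j : ℝ))) :
    ∑ j ∈ Finset.Icc 1 r, |dd j| < Real.cosh (Real.pi * (σ : ℝ) ^ (-(1 / 2 : ℝ))) := by
  obtain ⟨m, rfl⟩ : ∃ m, r = m + 1 := ⟨r - 1, by omega⟩
  have hs0 : (0:ℝ) < (σ:ℝ) := by exact_mod_cast hσ
  set u : ℝ := (σ:ℝ) ^ (-(1/2:ℝ)) with hu_def
  have hu : 0 < u := Real.rpow_pos_of_pos hs0 _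
  have hu2 : u^2 = ((σ:ℝ))⁻¹ := by
    rw [hu_def, ← Real.rpow_natCast ((σ:ℝ) ^ (-(1/2:ℝ))) 2, ← Real.rpow_mul hs0.le]
    norm_num [Real.rpow_neg_one]
  have hσu : (σ:ℝ) * u^2 = 1 := by rw [hu2]; field_simp
  -- the product form of each term
  have key : ∀ b, b ≤ m → |dd (b+1)| =
      ∏ a ∈ (Finset.range (m+1)).erase b, (((a:ℝ))^2+u^2)/|((a:ℝ))^2-((b:ℝ))^2| := by
    intro b hb
    rw [hdd (b+1), Finset.abs_prod]
    have hset : (Finset.Icc 1 (m+1)).erase (b+1)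
        = Finset.image (· + 1) ((Finset.range (m+1)).erase b) := by
      ext x
      simp only [Finset.mem_erase, Finset.mem_Icc, Finset.mem_image, Finset.mem_range]
      constructor
      · rintro ⟨hne, h1, h2⟩
        refine ⟨x-1, ⟨?_, ?_⟩, ?_⟩ <;> omega
      · rintro ⟨a, ⟨hne, ha⟩, rfl⟩
        refine ⟨?_, ?_, ?_⟩ <;> omega
    rw [hset, Finset.prod_image (by intro x _ y _ h; simp only at h; omega)]
    apply Finset.prod_congr rfl
    intro a ha
    obtain ⟨hab, ham⟩ := Finset.mem_erase.mp ha
    have hnna : nn (a+1) = σ * a^2 + 1 := by rw [hnn, Nat.add_sub_cancel]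
    have hnnb : nn (b+1) = σ * b^2 + 1 := by rw [hnn, Nat.add_sub_cancel]
    rw [hnna, hnnb, abs_div]
    have hnum : ((σ * a^2 + 1 : ℕ) : ℝ) = (σ:ℝ) * (((a:ℝ))^2 + u^2) := by
      push_cast
      nlinarith [hσu]
    have hden : ((σ * a^2 + 1 : ℕ) : ℝ) - ((σ * b^2 + 1 : ℕ) : ℝ)
        = (σ:ℝ) * (((a:ℝ))^2 - ((b:ℝ))^2) := by push_cast; ring
    rw [hden, hnum, abs_mul, abs_mul, abs_of_pos hs0,
      abs_of_pos (show (0:ℝ) < ((a:ℝ))^2 + u^2 by positivity),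
      mul_div_mul_left _ _ (ne_of_gt hs0)]
  -- reindex the sum
  have hre : ∑ j ∈ Finset.Icc 1 (m+1), |dd j| = ∑ b ∈ Finset.range (m+1), |dd (b+1)| := by
    rw [show Finset.Icc 1 (m+1) = Finset.Ico 1 (m+2) by rfl, Finset.sum_Ico_eq_sum_range]
    apply Finset.sum_congr (by congr 1) (fun i _ => by rw [add_comm])
  set P : ℝ := ∏ j ∈ Finset.range m, (1 + u^2/((j:ℝ)+1)^2) with hP
  have hPpos : 0 < P := P_pos u m
  -- b = 0 term
  have hmfact : ∏ j ∈ Finset.range m, ((j:ℝ)+1) = (m ! : ℝ) := by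
    rw [← Finset.prod_range_add_one_eq_factorial]
    push_cast
    rfl
  have hprodsq : ∏ j ∈ Finset.range m, (((j:ℝ)+1)^2 + u^2)
      = P * ((m ! : ℝ))^2 := by
    rw [hP, ← hmfact, ← Finset.prod_pow, ← Finset.prod_mul_distrib]
    apply Finset.prod_congr rfl
    intro j _
    have : ((j:ℝ)+1)^2 ≠ 0 := by positivity
    field_simp
  have hT0 : |dd 1| = P := by
    rw [key 0 (by omega)]
    have hset : (Finset.range (m+1)).erase 0 = Finset.image (· + 1) (Finset.range m) := by
      ext x
      simp only [Finset.mem_erase, Finset.mem_range, Finset.mem_image]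
      constructor
      · rintro ⟨h1, h2⟩; exact ⟨x-1, by omega, by omega⟩
      · rintro ⟨a, ha, rfl⟩; exact ⟨by omega, by omega⟩
    rw [hset, Finset.prod_image (by intro x _ y _ h; simp only at h; omega), hP]
    apply Finset.prod_congr rfl
    intro j _
    push_cast
    rw [show ((j:ℝ)+1)^2 - 0^2 = ((j:ℝ)+1)^2 by ring,
      abs_of_pos (show (0:ℝ) < ((j:ℝ)+1)^2 by positivity)]
    have : ((j:ℝ)+1)^2 ≠ 0 := by positivity
    field_simp
  -- b ≥ 1 terms
  have hTb : ∀ i, i ∈ Finset.range m → |dd (i+1+1)| ≤ 2*u^2/(((i+1:ℕ):ℝ)^2+u^2) * P := by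
    intro i hi
    have him := Finset.mem_range.mp hi
    set b := i + 1 with hb_def
    have hb1 : 1 ≤ b := by omega
    have hbm : b ≤ m := by omega
    rw [key b hbm]
    rw [Finset.prod_div_distrib]
    have hbmem : b ∈ Finset.range (m+1) := by simp; omega
    have hnum : ∏ a ∈ (Finset.range (m+1)).erase b, (((a:ℝ))^2+u^2)
        = (u^2 * ∏ j ∈ Finset.range m, (((j:ℝ)+1)^2 + u^2)) / (((b:ℕ):ℝ)^2+u^2) := by
      rw [eq_div_iff (by positivity : (((b:ℕ):ℝ)^2+u^2) ≠ 0)]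
      rw [Finset.prod_erase_mul _ _ hbmem]
      rw [Finset.prod_range_succ' (fun a => ((a:ℝ))^2+u^2)]
      push_cast
      ring
    rw [hnum, prodK m b hb1 hbm, hprodsq]
    have hfle : ((m ! : ℝ)) * (m ! : ℝ) ≤ ((m-b)! : ℝ) * ((m+b)! : ℝ) := by
      exact_mod_cast fact_sq_le m b hbm
    have h1 : (0:ℝ) < ((b:ℕ):ℝ)^2+u^2 := by positivity
    have h2 : (0:ℝ) < ((m-b)! : ℝ) * ((m+b)! : ℝ) := by positivity
    have h3 : (0:ℝ) < (m ! : ℝ) := by exact_mod_cast Nat.factorial_pos m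
    have hTeq : (u^2 * (P * ((m ! : ℝ))^2)) / (((b:ℕ):ℝ)^2+u^2)
          / (((m-b)!:ℝ) * ((m+b)!:ℝ) / 2)
        = 2*u^2/(((b:ℕ):ℝ)^2+u^2) * P
          * (((m ! : ℝ) * (m ! : ℝ)) / (((m-b)!:ℝ) * ((m+b)!:ℝ))) := by
      field_simp
    rw [hTeq]
    nth_rewrite 2 [← mul_one (2*u^2/(((b:ℕ):ℝ)^2+u^2) * P)]
    apply mul_le_mul_of_nonneg_left _ (by positivity)
    exact div_le_one_of_le₀ hfle h2.le
  -- assemble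
  rw [hre, Finset.sum_range_succ' (fun b => |dd (b+1)|) m, hT0]
  have hsum : ∑ i ∈ Finset.range m, |dd (i+1+1)|
      ≤ ∑ i ∈ Finset.range m, 2*u^2/(((i:ℝ)+1)^2+u^2) * P := by
    apply Finset.sum_le_sum
    intro i hi
    have := hTb i hi
    push_cast at this ⊢
    exact this
  have hcot := cot_bound u hu m
  have hπu : (0:ℝ) < π * u := by positivity
  have hsh : (0:ℝ) < Real.sinh (π*u) := Real.sinh_pos_iff.mpr hπu
  have hcoth : (0:ℝ) < π*u*Real.cosh (π*u)/Real.sinh (π*u) := by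
    have : (0:ℝ) < Real.cosh (π*u) := Real.cosh_pos (π*u)
    positivity
  calc (∑ i ∈ Finset.range m, |dd (i+1+1)|) + P
      ≤ (∑ i ∈ Finset.range m, 2*u^2/(((i:ℝ)+1)^2+u^2) * P) + P := by linarith
    _ = P * (1 + ∑ i ∈ Finset.range m, 2*u^2/(((i:ℝ)+1)^2+u^2)) := by
        rw [← Finset.sum_mul]; ring
    _ ≤ P * (π*u*Real.cosh (π*u)/Real.sinh (π*u)) := by
        apply mul_le_mul_of_nonneg_left _ hPpos.le
        linarith
    _ < (Real.sinh (π*u)/(π*u)) * (π*u*Real.cosh (π*u)/Real.sinh (π*u)) := by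
        apply mul_lt_mul_of_pos_right (P_lt_sinh u hu m) hcoth
       _ = Real.cosh (π*u) := by
        field_simp
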